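/- Let G be a graph with two distinct vertices u, v, and let G' be obtained from G by adding an ear u w_1 w_2 … w_l v of length l+1 with l ≥ 1 (a path of new internal vertices w_1,…,w_l joining u to v). Then for all m ∈ ℕ, P_DP(G',m) ≤ P_DP(G,m)·(m-1)^{l+1}/m. -/

import Mathlib

open SimpleGraph

/-- The number of proper `m`-colorings of a graph `G`. -/
noncomputable def numColorings {V : Type} (G : SimpleGraph V) (m : ℕ) : ℕ :=
  Nat.card {c : V → Fin m // ∀ ⦃a b : V⦄, G.Adj a b → c a ≠ c b}

/-- An `m`-fold cover `(L, H)` of a graph `G`. -/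
structure DPCover {V : Type} (G : SimpleGraph V) (m : ℕ) where
  X : Type
  H : SimpleGraph X
  L : V → Set X
  partition : ∀ x : X, ∃! v : V, x ∈ L v
  fold : ∀ v : V, Nat.card (L v) = m
  cliques : ∀ v : V, ∀ x ∈ L v, ∀ y ∈ L v, x ≠ y → H.Adj x y
  cross : ∀ u v : V, ∀ x ∈ L u, ∀ y ∈ L v, H.Adj x y → u = v ∨ G.Adj u v
  matching : ∀ u v : V, G.Adj u v → ∀ x ∈ L u, ∀ y ∈ L v, ∀ z ∈ L v,
      H.Adj x y → H.Adj x z → y = z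
  matching' : ∀ u v : V, G.Adj u v → ∀ y ∈ L u, ∀ z ∈ L u, ∀ x ∈ L v,
      H.Adj y x → H.Adj z x → y = z

/-- A cover is full if for each edge `uv` of `G` the matching between `L u` and `L v`
is a perfect matching. -/
def DPCover.IsFull {V : Type} {G : SimpleGraph V} {m : ℕ} (C : DPCover G m) : Prop :=
  ∀ u v : V, G.Adj u v → ∀ x ∈ C.L u, ∃ y ∈ C.L v, C.H.Adj x y

/-- An `H`-coloring of `G`, viewed as an independent transversal of the lists. -/
def DPCover.IsColoring {V : Type} {G : SimpleGraph V} {m : ℕ} (C : DPCover G m)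
    (f : V → C.X) : Prop :=
  (∀ v : V, f v ∈ C.L v) ∧ ∀ u v : V, u ≠ v → ¬ C.H.Adj (f u) (f v)

/-- `P_DP(G, 𝓗)`, the number of `𝓗`-colorings of `G`. -/
noncomputable def DPCover.count {V : Type} {G : SimpleGraph V} {m : ℕ}
    (C : DPCover G m) : ℕ :=
  Nat.card {f : V → C.X // C.IsColoring f}

/-- The DP color function `P_DP(G, m)`. -/
noncomputable def PDP {V : Type} (G : SimpleGraph V) (m : ℕ) : ℕ :=
  sInf {n : ℕ | ∃ C : DPCover G m, C.count = n}

/-- The DP-chromatic number `χ_DP(G)`. -/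
noncomputable def chiDP {V : Type} (G : SimpleGraph V) : ℕ :=
  sInf {m : ℕ | ∀ C : DPCover G m, ∃ f : V → C.X, C.IsColoring f}

/-- A canonical labeling of an `m`-fold cover. -/
def DPCover.HasCanonicalLabeling {V : Type} {G : SimpleGraph V} {m : ℕ}
    (C : DPCover G m) : Prop :=
  ∃ φ : V × Fin m → C.X, Function.Bijective φ ∧ (∀ v j, φ (v, j) ∈ C.L v) ∧
    ∀ u v : V, G.Adj u v → ∀ j : Fin m, C.H.Adj (φ (u, j)) (φ (v, j))

/-- A graph is 2-connected if it has at least 3 vertices, is connected, and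
remains connected after deleting any single vertex. -/
def TwoConnected {V : Type} (G : SimpleGraph V) : Prop :=
  3 ≤ Nat.card V ∧ G.Connected ∧ ∀ v : V, (G.induce ({v}ᶜ : Set V)).Connected

/-- The graph obtained from `G` by adding an ear `u w₁ w₂ … w_l v` of length `l + 1`:
the internal vertices are `l` new vertices, modelled by `Fin l`. -/
def addEar {V : Type} (G : SimpleGraph V) (u v : V) (l : ℕ) :
    SimpleGraph (V ⊕ Fin l) :=
  G.map (⟨Sum.inl, Sum.inl_injective⟩ : V ↪ V ⊕ Fin l) ⊔
    SimpleGraph.fromRel (fun a b =>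
      (∃ j : Fin l, (j : ℕ) = 0 ∧ a = Sum.inl u ∧ b = Sum.inr j) ∨
      (∃ i j : Fin l, (i : ℕ) + 1 = (j : ℕ) ∧ a = Sum.inr i ∧ b = Sum.inr j) ∨
      (∃ i : Fin l, (i : ℕ) = l - 1 ∧ a = Sum.inr i ∧ b = Sum.inl v))

open Sum

namespace Aux13

/-- The canonical cover. -/
def canonCover {V : Type} (G : SimpleGraph V) (m : ℕ) : DPCover G m where
  X := V × Fin m
  H := { Adj := fun x y => (x.1 = y.1 ∧ x.2 ≠ y.2) ∨ (G.Adj x.1 y.1 ∧ x.2 = y.2)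
         symm := by
           constructor
           rintro x y (⟨h1, h2⟩ | ⟨h1, h2⟩)
           · exact Or.inl ⟨h1.symm, h2.symm⟩
           · exact Or.inr ⟨h1.symm, h2.symm⟩
         loopless := by constructor; rintro x (⟨h1, h2⟩ | ⟨h1, h2⟩)
                        · exact h2 rfl
                        · exact G.loopless.irrefl _ h1 }
  L := fun w => {x | x.1 = w}
  partition := fun x => ⟨x.1, rfl, fun w hw => hw.symm⟩
  fold := fun w => by
    have e : {x : V × Fin m | x.1 = w} ≃ Fin m :=
      { toFun := fun x => x.1.2
        invFun := fun j => ⟨(w, j), rfl⟩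
        left_inv := by rintro ⟨⟨a, j⟩, rfl⟩; rfl
        right_inv := fun j => rfl }
    rw [Nat.card_congr e, Nat.card_eq_fintype_card, Fintype.card_fin]
  cliques := by
    rintro w ⟨a, j⟩ rfl ⟨b, j'⟩ hb hne
    exact Or.inl ⟨hb.symm, fun h => hne (by cases hb; cases h; rfl)⟩
  cross := by
    rintro a b ⟨a', j⟩ rfl ⟨b', j'⟩ rfl (⟨h1, h2⟩ | ⟨h1, h2⟩)
    · exact Or.inl h1
    · exact Or.inr h1
  matching := by
    rintro a b hab ⟨a', j⟩ rfl ⟨b', j1⟩ rfl ⟨b'', j2⟩ rfl h1 h2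
    have e1 : j1 = j := by
      rcases h1 with ⟨h, _⟩ | ⟨_, h⟩
      · exact absurd h (G.ne_of_adj hab)
      · exact h.symm
    have e2 : j2 = j := by
      rcases h2 with ⟨h, _⟩ | ⟨_, h⟩
      · exact absurd h (G.ne_of_adj hab)
      · exact h.symm
    rw [e1, e2]
  matching' := by
    rintro a b hab ⟨a', j1⟩ rfl ⟨a'', j2⟩ rfl ⟨b', j⟩ rfl h1 h2
    have e1 : j1 = j := by
      rcases h1 with ⟨h, _⟩ | ⟨_, h⟩
      · exact absurd h (G.ne_of_adj hab)
      · exact h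
    have e2 : j2 = j := by
      rcases h2 with ⟨h, _⟩ | ⟨_, h⟩
      · exact absurd h (G.ne_of_adj hab)
      · exact h
    rw [e1, e2]

lemma exists_cover_count_eq_PDP {V : Type} (G : SimpleGraph V) (m : ℕ) :
    ∃ C : DPCover G m, C.count = PDP G m := by
  have : ((canonCover G m).count) ∈ {n : ℕ | ∃ C : DPCover G m, C.count = n} :=
    ⟨canonCover G m, rfl⟩
  exact Nat.sInf_mem ⟨_, this⟩

lemma PDP_le {V : Type} {G : SimpleGraph V} {m : ℕ} (C : DPCover G m) :
    PDP G m ≤ C.count :=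
  Nat.sInf_le ⟨C, rfl⟩

end Aux13
namespace Aux13
section Ear
set_option linter.unusedSectionVars false

variable {V : Type} {G : SimpleGraph V} {u v : V} {l m : ℕ}

lemma mem_unique (C : DPCover G m) {x : C.X} {a b : V}
    (ha : x ∈ C.L a) (hb : x ∈ C.L b) : a = b := by
  obtain ⟨w, -, hw⟩ := C.partition x
  exact (hw a ha).trans (hw b hb).symm

lemma addEar_adj_inl_inl {a b : V} :
    (addEar G u v l).Adj (inl a) (inl b) ↔ G.Adj a b := by
  simp [addEar, SimpleGraph.map_adj, SimpleGraph.fromRel_adj]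
  exact SimpleGraph.map_adj_apply (f := (⟨Sum.inl, Sum.inl_injective⟩ : V ↪ V ⊕ Fin l))

lemma addEar_adj_uw {i : Fin l} (h : (i : ℕ) = 0) :
    (addEar G u v l).Adj (inl u) (inr i) := by
  refine Or.inr ((SimpleGraph.fromRel_adj _ _ _).2 ⟨by simp, Or.inl (Or.inl ⟨i, h, rfl, rfl⟩)⟩)

lemma addEar_adj_wv {i : Fin l} (h : (i : ℕ) = l - 1) :
    (addEar G u v l).Adj (inr i) (inl v) := by
  refine Or.inr ((SimpleGraph.fromRel_adj _ _ _).2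
    ⟨by simp, Or.inl (Or.inr (Or.inr ⟨i, h, rfl, rfl⟩))⟩)

lemma addEar_adj_ww {i i' : Fin l} (h : (i : ℕ) + 1 = i') :
    (addEar G u v l).Adj (inr i) (inr i') := by
  refine Or.inr ((SimpleGraph.fromRel_adj _ _ _).2
    ⟨?_, Or.inl (Or.inr (Or.inl ⟨i, i', h, rfl, rfl⟩))⟩)
  intro he
  have : i = i' := by simpa using he
  cases this
  omega

variable (C : DPCover G m) [NeZero m]
  (eu : ↥(C.L u) ≃ Fin m) (ev : ↥(C.L v) ≃ Fin m) (t : Fin m)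

/-- Adjacency between a ground-cover vertex and a path-cover vertex. -/
def eside (x : C.X) (p : Fin l × Fin m) : Prop :=
  ((p.1 : ℕ) = 0 ∧ ∃ h : x ∈ C.L u, eu ⟨x, h⟩ = p.2) ∨
  ((p.1 : ℕ) = l - 1 ∧ ∃ h : x ∈ C.L v, ev ⟨x, h⟩ = p.2 + t)

def eadj : (C.X ⊕ Fin l × Fin m) → (C.X ⊕ Fin l × Fin m) → Prop
  | .inl x, .inl y => C.H.Adj x y
  | .inl x, .inr p => eside C eu ev t x p
  | .inr p, .inl x => eside C eu ev t x p
  | .inr p, .inr q => (p.1 = q.1 ∧ p.2 ≠ q.2) ∨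
      (((p.1 : ℕ) + 1 = q.1 ∨ (q.1 : ℕ) + 1 = p.1) ∧ p.2 = q.2)

lemma eside_unique_j (huv : u ≠ v) {x : C.X} {i : Fin l} {j1 j2 : Fin m}
    (h1 : eside C eu ev t x (i, j1)) (h2 : eside C eu ev t x (i, j2)) : j1 = j2 := by
  rcases h1 with ⟨-, hx, he⟩ | ⟨-, hx, he⟩ <;> rcases h2 with ⟨-, hx', he'⟩ | ⟨-, hx', he'⟩
  · exact he.symm.trans he'
  · exact absurd (mem_unique C hx hx') huv
  · exact absurd (mem_unique C hx' hx) huv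
  · exact add_right_cancel (he.symm.trans he')

lemma eside_unique_x (huv : u ≠ v) {y0 z0 : C.X} {a : V} (hy : y0 ∈ C.L a)
    (hz : z0 ∈ C.L a) {i : Fin l} {j : Fin m}
    (h1 : eside C eu ev t y0 (i, j)) (h2 : eside C eu ev t z0 (i, j)) : y0 = z0 := by
  rcases h1 with ⟨-, hx, he⟩ | ⟨-, hx, he⟩ <;> rcases h2 with ⟨-, hx', he'⟩ | ⟨-, hx', he'⟩
  · exact congrArg Subtype.val (eu.injective (he.trans he'.symm))
  · exact absurd ((mem_unique C hy hx).symm.trans (mem_unique C hz hx')) huv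
  · exact absurd ((mem_unique C hz hx').symm.trans (mem_unique C hy hx)) huv
  · exact congrArg Subtype.val (ev.injective (he.trans he'.symm))

end Ear
end Aux13
namespace Aux13
section Ear2

variable {V : Type} {G : SimpleGraph V} {u v : V} {l m : ℕ}
  (C : DPCover G m) [NeZero m]
  (eu : ↥(C.L u) ≃ Fin m) (ev : ↥(C.L v) ≃ Fin m) (t : Fin m)

set_option linter.unusedSectionVars false

def earCover (huv : u ≠ v) (hl : 1 ≤ l) : DPCover (addEar G u v l) m where
  X := C.X ⊕ Fin l × Fin m
  H :=
    { Adj := eadj C eu ev t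
      symm := by
        constructor
        rintro (x | p) (y | q) h
        · exact C.H.adj_symm h
        · exact h
        · exact h
        · rcases h with ⟨h1, h2⟩ | ⟨h1, h2⟩
          · exact Or.inl ⟨h1.symm, h2.symm⟩
          · exact Or.inr ⟨h1.symm, h2.symm⟩
      loopless := by
        constructor
        rintro (x | p) h
        · exact C.H.loopless.irrefl x h
        · rcases h with ⟨-, h2⟩ | ⟨h1, -⟩
          · exact h2 rfl
          · omega }
  L := Sum.elim (fun a => Sum.inl '' C.L a) (fun i => {x | ∃ j : Fin m, x = inr (i, j)})
  partition := by
    rintro (x | ⟨i, j⟩)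
    · obtain ⟨w, hw, hwu⟩ := C.partition x
      refine ⟨inl w, ⟨x, hw, rfl⟩, ?_⟩
      rintro (b | i) hb
      · obtain ⟨x', hx', he⟩ := hb
        obtain rfl : x' = x := by simpa using he
        rw [hwu b hx']
      · obtain ⟨j, he⟩ := hb
        simp at he
    · refine ⟨inr i, ⟨j, rfl⟩, ?_⟩
      rintro (b | i') hb
      · obtain ⟨x', -, he⟩ := hb
        simp at he
      · obtain ⟨j', he⟩ := hb
        obtain ⟨rfl, -⟩ : i' = i ∧ j' = j := by simpa [eq_comm] using he
        rfl
  fold := by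
    rintro (a | i)
    · exact (Nat.card_image_of_injective Sum.inl_injective _).trans (C.fold a)
    · have hset : {x : C.X ⊕ Fin l × Fin m | ∃ j : Fin m, x = inr (i, j)} =
          Set.range (fun j : Fin m => (inr (i, j) : C.X ⊕ Fin l × Fin m)) := by
        ext x
        exact exists_congr fun j => eq_comm
      have hinj : Function.Injective (fun j : Fin m => (inr (i, j) : C.X ⊕ Fin l × Fin m)) := by
        intro a b h
        simpa using h
      show Nat.card {x : C.X ⊕ Fin l × Fin m | ∃ j : Fin m, x = inr (i, j)} = m
      rw [hset, Nat.card_range_of_injective hinj, Nat.card_eq_fintype_card, Fintype.card_fin]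
  cliques := by
    rintro (a | i) x hx y hy hne
    · obtain ⟨x0, hx0, rfl⟩ := hx
      obtain ⟨y0, hy0, rfl⟩ := hy
      exact C.cliques a x0 hx0 y0 hy0 fun h => hne (by rw [h])
    · obtain ⟨j1, rfl⟩ := hx
      obtain ⟨j2, rfl⟩ := hy
      exact Or.inl ⟨rfl, fun h => hne (congrArg (fun j : Fin m => (inr (i, j) : C.X ⊕ Fin l × Fin m)) h)⟩
  cross := by
    rintro (a | i) (b | i') x hx y hy hadj
    · obtain ⟨x0, hx0, rfl⟩ := hx
      obtain ⟨y0, hy0, rfl⟩ := hy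
      rcases C.cross a b x0 hx0 y0 hy0 hadj with h | h
      · exact Or.inl (by rw [h])
      · exact Or.inr (addEar_adj_inl_inl.2 h)
    · obtain ⟨x0, hx0, rfl⟩ := hx
      obtain ⟨j, rfl⟩ := hy
      rcases hadj with ⟨h0, hm, -⟩ | ⟨h0, hm, -⟩
      · obtain rfl : u = a := (mem_unique C hx0 hm).symm
        exact Or.inr (addEar_adj_uw h0)
      · obtain rfl : v = a := (mem_unique C hx0 hm).symm
        exact Or.inr (((addEar G u v l).adj_symm (addEar_adj_wv h0)))
    · obtain ⟨j, rfl⟩ := hx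
      obtain ⟨y0, hy0, rfl⟩ := hy
      rcases hadj with ⟨h0, hm, -⟩ | ⟨h0, hm, -⟩
      · obtain rfl : u = b := (mem_unique C hy0 hm).symm
        exact Or.inr ((addEar G u v l).adj_symm (addEar_adj_uw h0))
      · obtain rfl : v = b := (mem_unique C hy0 hm).symm
        exact Or.inr (addEar_adj_wv h0)
    · obtain ⟨j1, rfl⟩ := hx
      obtain ⟨j2, rfl⟩ := hy
      rcases hadj with ⟨h1, -⟩ | ⟨h1 | h1, -⟩
      · exact Or.inl (congrArg Sum.inr h1)
      · exact Or.inr (addEar_adj_ww h1)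
      · exact Or.inr ((addEar G u v l).adj_symm (addEar_adj_ww h1))
  matching := by
    rintro (a | i) (b | i') hab x hx y hy z hz hxy hxz
    · obtain ⟨x0, hx0, rfl⟩ := hx
      obtain ⟨y0, hy0, rfl⟩ := hy
      obtain ⟨z0, hz0, rfl⟩ := hz
      exact congrArg Sum.inl
        (C.matching a b (addEar_adj_inl_inl.1 hab) x0 hx0 y0 hy0 z0 hz0 hxy hxz)
    · obtain ⟨x0, hx0, rfl⟩ := hx
      obtain ⟨j1, rfl⟩ := hy
      obtain ⟨j2, rfl⟩ := hz
      exact congrArg (fun j => (inr (i', j) : C.X ⊕ Fin l × Fin m))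
        (eside_unique_j C eu ev t huv hxy hxz)
    · obtain ⟨j, rfl⟩ := hx
      obtain ⟨y0, hy0, rfl⟩ := hy
      obtain ⟨z0, hz0, rfl⟩ := hz
      exact congrArg Sum.inl (eside_unique_x C eu ev t huv hy0 hz0 hxy hxz)
    · obtain ⟨j, rfl⟩ := hx
      obtain ⟨j1, rfl⟩ := hy
      obtain ⟨j2, rfl⟩ := hz
      have hne : i ≠ i' := by
        intro h
        exact (addEar G u v l).loopless.irrefl _ (h ▸ hab)
      have e1 : j1 = j := by
        rcases hxy with ⟨h, -⟩ | ⟨-, h⟩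
        · exact absurd h hne
        · exact h.symm
      have e2 : j2 = j := by
        rcases hxz with ⟨h, -⟩ | ⟨-, h⟩
        · exact absurd h hne
        · exact h.symm
      rw [e1, e2]
  matching' := by
    rintro (a | i) (b | i') hab y hy z hz x hx hyx hzx
    · obtain ⟨y0, hy0, rfl⟩ := hy
      obtain ⟨z0, hz0, rfl⟩ := hz
      obtain ⟨x0, hx0, rfl⟩ := hx
      exact congrArg Sum.inl
        (C.matching' a b (addEar_adj_inl_inl.1 hab) y0 hy0 z0 hz0 x0 hx0 hyx hzx)
    · obtain ⟨y0, hy0, rfl⟩ := hy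
      obtain ⟨z0, hz0, rfl⟩ := hz
      obtain ⟨j, rfl⟩ := hx
      exact congrArg Sum.inl (eside_unique_x C eu ev t huv hy0 hz0 hyx hzx)
    · obtain ⟨j1, rfl⟩ := hy
      obtain ⟨j2, rfl⟩ := hz
      obtain ⟨x0, hx0, rfl⟩ := hx
      exact congrArg (fun j => (inr (i, j) : C.X ⊕ Fin l × Fin m))
        (eside_unique_j C eu ev t huv hyx hzx)
    · obtain ⟨j1, rfl⟩ := hy
      obtain ⟨j2, rfl⟩ := hz
      obtain ⟨j, rfl⟩ := hx
      have hne : i ≠ i' := by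
        intro h
        exact (addEar G u v l).loopless.irrefl _ (h ▸ hab)
      have e1 : j1 = j := by
        rcases hyx with ⟨h, -⟩ | ⟨-, h⟩
        · exact absurd h hne
        · exact h
      have e2 : j2 = j := by
        rcases hzx with ⟨h, -⟩ | ⟨-, h⟩
        · exact absurd h hne
        · exact h
      rw [e1, e2]

end Ear2
end Aux13
namespace Aux13
section Count

variable {V : Type} {G : SimpleGraph V} {u v : V} {l m : ℕ}

set_option linter.unusedSectionVars false

lemma cover_finite [Finite V] (C : DPCover G m) [NeZero m] : Finite C.X := by
  have h1 : ∀ w, (C.L w).Finite := fun w => by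
    have : Finite ↥(C.L w) :=
      Nat.finite_of_card_ne_zero (by rw [C.fold]; exact NeZero.ne m)
    exact Set.toFinite _
  have h2 : (Set.univ : Set C.X) = ⋃ w, C.L w := by
    ext x
    simp only [Set.mem_univ, true_iff, Set.mem_iUnion]
    obtain ⟨w, hw, -⟩ := C.partition x
    exact ⟨w, hw⟩
  exact Set.finite_univ_iff.mp (h2 ▸ Set.finite_iUnion h1)

variable (hl : 1 ≤ l) [NeZero m]

/-- Chains in `Fin m` of length `l` starting away from `a`. -/
def chainSet (a : Fin m) : Type :=
  {c : Fin l → Fin m // c ⟨0, hl⟩ ≠ a ∧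
    ∀ (k : ℕ) (h : k + 1 < l), c ⟨k + 1, h⟩ ≠ c ⟨k, by omega⟩}

/-- Extension of a chain to `ℕ`, prepending the anchor `a`. -/
def Cext (a : Fin m) (c : Fin l → Fin m) : ℕ → Fin m := fun k =>
  if h : 1 ≤ k ∧ k ≤ l then c ⟨k - 1, by omega⟩ else a

lemma Cext_zero (a : Fin m) (c : Fin l → Fin m) : Cext a c 0 = a := by
  simp [Cext]

lemma Cext_succ (a : Fin m) (c : Fin l → Fin m) (k : ℕ) (h : k < l) :
    Cext a c (k + 1) = c ⟨k, h⟩ := by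
  have h' : 1 ≤ k + 1 ∧ k + 1 ≤ l := by omega
  simp only [Cext, dif_pos h', Nat.add_sub_cancel]

lemma Cext_pos (a : Fin m) (c : Fin l → Fin m) (k : ℕ) (h1 : 0 < k) (h2 : k ≤ l) :
    Cext a c k = c ⟨k - 1, by omega⟩ := by
  have h' : 1 ≤ k ∧ k ≤ l := ⟨h1, h2⟩
  simp only [Cext, dif_pos h']

/-- Extension of a difference sequence to `ℕ` by zero. -/
def Dext (d : Fin l → Fin m) : ℕ → Fin m := fun k =>
  if h : k < l then d ⟨k, h⟩ else 0

lemma Dext_lt (d : Fin l → Fin m) (k : ℕ) (h : k < l) : Dext d k = d ⟨k, h⟩ := by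
  simp [Dext, h]

lemma Cext_sums (a : Fin m) (d : Fin l → Fin m) (k : ℕ) (hk : k ≤ l) :
    Cext a (fun i : Fin l => a + ∑ j ∈ Finset.range ((i : ℕ) + 1), Dext d j) k =
      a + ∑ j ∈ Finset.range k, Dext d j := by
  rcases Nat.eq_zero_or_pos k with rfl | h
  · rw [Cext_zero, Finset.sum_range_zero, add_zero]
  · obtain ⟨k', rfl⟩ : ∃ k', k = k' + 1 := ⟨k - 1, by omega⟩
    rw [Cext_succ _ _ _ (by omega)]

open Fin.CommRing in
def chainEquiv (a : Fin m) : chainSet hl a ≃ (Fin l → {d : Fin m // d ≠ 0}) where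
  toFun c := fun i => ⟨Cext a c.1 ((i : ℕ) + 1) - Cext a c.1 (i : ℕ), by
    rw [sub_ne_zero, Cext_succ a c.1 _ i.isLt]
    rcases Nat.eq_zero_or_pos (i : ℕ) with h0 | h0
    · rw [show Cext a c.1 (i : ℕ) = a from by rw [h0, Cext_zero]]
      rw [show (⟨(i : ℕ), i.isLt⟩ : Fin l) = ⟨0, hl⟩ from Fin.mk_eq_mk.2 h0]
      exact c.2.1
    · rw [Cext_pos a c.1 (i : ℕ) h0 (le_of_lt i.isLt)]
      have h3 := c.2.2 ((i : ℕ) - 1) (by omega)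
      rw [show (⟨(i : ℕ), i.isLt⟩ : Fin l) = ⟨(i : ℕ) - 1 + 1, by omega⟩ from
        Fin.mk_eq_mk.2 (by omega)]
      exact h3⟩
  invFun d := ⟨fun i : Fin l =>
      a + ∑ k ∈ Finset.range ((i : ℕ) + 1), Dext (fun j => (d j : Fin m)) k, by
    constructor
    · show a + ∑ k ∈ Finset.range (0 + 1), _ ≠ a
      rw [Finset.sum_range_one, Dext_lt _ 0 (by omega)]
      intro h
      exact (d ⟨0, by omega⟩).2 (add_eq_left.1 h)
    · intro k hk
      show a + ∑ j ∈ Finset.range (k + 1 + 1), _ ≠ a + ∑ j ∈ Finset.range (k + 1), _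
      rw [Finset.sum_range_succ (n := k + 1)]
      intro h
      have h2 : Dext (fun j => ((d j : Fin m))) (k + 1) = 0 := by
        have h3 := add_left_cancel h
        rwa [add_eq_left] at h3
      rw [Dext_lt _ _ hk] at h2
      exact (d ⟨k + 1, hk⟩).2 h2⟩
  left_inv := by
    intro c
    apply Subtype.ext
    funext i
    show a + ∑ k ∈ Finset.range ((i : ℕ) + 1),
        Dext (fun j : Fin l => Cext a c.1 ((j : ℕ) + 1) - Cext a c.1 (j : ℕ)) k = c.1 i
    have hcong : ∀ k ∈ Finset.range ((i : ℕ) + 1),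
        Dext (fun j : Fin l => Cext a c.1 ((j : ℕ) + 1) - Cext a c.1 (j : ℕ)) k =
          Cext a c.1 (k + 1) - Cext a c.1 k := by
      intro k hk
      have hkl : k < l := by
        have h1 := Finset.mem_range.1 hk
        have h2 := i.isLt
        omega
      rw [Dext_lt _ _ hkl]
    rw [Finset.sum_congr rfl hcong]
    rw [Finset.sum_range_sub (fun k => Cext a c.1 k)]
    rw [Cext_zero, Cext_succ a c.1 _ i.isLt]
    rw [show (⟨(i : ℕ), i.isLt⟩ : Fin l) = i from Fin.ext rfl]
    ring
  right_inv := by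
    intro d
    funext i
    apply Subtype.ext
    show Cext a (fun i : Fin l =>
        a + ∑ k ∈ Finset.range ((i : ℕ) + 1), Dext (fun j => (d j : Fin m)) k) ((i : ℕ) + 1) -
      Cext a (fun i : Fin l =>
        a + ∑ k ∈ Finset.range ((i : ℕ) + 1), Dext (fun j => (d j : Fin m)) k) (i : ℕ) =
      (d i : Fin m)
    rw [Cext_sums a _ _ i.isLt, Cext_sums a _ _ (le_of_lt i.isLt),
      Finset.sum_range_succ, Dext_lt _ _ i.isLt,
      show (⟨(i : ℕ), i.isLt⟩ : Fin l) = i from Fin.ext rfl]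
    ring

lemma card_chainSet (a : Fin m) : Nat.card (chainSet hl a) = (m - 1) ^ l := by
  rw [Nat.card_congr (chainEquiv hl a), Nat.card_pi]
  have h1 : Nat.card {d : Fin m // d ≠ 0} = m - 1 := by
    rw [Nat.card_eq_fintype_card, Fintype.card_subtype_compl,
      Fintype.card_subtype_eq (0 : Fin m), Fintype.card_fin]
  rw [Finset.prod_congr rfl fun i _ => h1, Finset.prod_const, Finset.card_univ,
    Fintype.card_fin]

open Fin.CommRing in
def lastEquiv (b x : Fin m) : {s : Fin m // b ≠ x + s} ≃ {d : Fin m // d ≠ 0} where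
  toFun s := ⟨x + s.1 - b, sub_ne_zero.2 (Ne.symm s.2)⟩
  invFun d := ⟨b + d.1 - x, by
    intro h
    apply d.2
    have h1 : x + (b + d.1 - x) = b + d.1 := by ring
    rw [h1] at h
    exact add_eq_left.1 h.symm⟩
  left_inv s := Subtype.ext (by ring)
  right_inv d := Subtype.ext (by ring)

lemma card_lastSet (b x : Fin m) : Nat.card {s : Fin m // b ≠ x + s} = m - 1 := by
  rw [Nat.card_congr (lastEquiv b x), Nat.card_eq_fintype_card,
    Fintype.card_subtype_compl, Fintype.card_subtype_eq (0 : Fin m), Fintype.card_fin]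

end Count
end Aux13
namespace Aux13
section Big

variable {V : Type} {G : SimpleGraph V} {u v : V} {l m : ℕ}

set_option linter.unusedSectionVars false

lemma card_nz [NeZero m] : Nat.card {d : Fin m // d ≠ 0} = m - 1 := by
  rw [Nat.card_eq_fintype_card, Fintype.card_subtype_compl,
    Fintype.card_subtype_eq (0 : Fin m), Fintype.card_fin]

variable (C : DPCover G m) [NeZero m]
  (eu : ↥(C.L u) ≃ Fin m) (ev : ↥(C.L v) ≃ Fin m) (huv : u ≠ v) (hl : 1 ≤ l)

def ChainP (f : {f : V → C.X // C.IsColoring f}) (c : Fin l → Fin m) (s : Fin m) : Prop :=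
  c ⟨0, hl⟩ ≠ eu ⟨f.1 u, f.2.1 u⟩ ∧
  (∀ (k : ℕ) (h : k + 1 < l), c ⟨k + 1, h⟩ ≠ c ⟨k, by omega⟩) ∧
  ev ⟨f.1 v, f.2.1 v⟩ ≠ c ⟨l - 1, by omega⟩ + s

lemma card_chainP (f : {f : V → C.X // C.IsColoring f}) :
    Nat.card {p : (Fin l → Fin m) × Fin m // ChainP C eu ev hl f p.1 p.2} =
      (m - 1) ^ (l + 1) := by
  have E1 : {p : (Fin l → Fin m) × Fin m // ChainP C eu ev hl f p.1 p.2} ≃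
      Σ c : chainSet hl (eu ⟨f.1 u, f.2.1 u⟩),
        {s : Fin m // ev ⟨f.1 v, f.2.1 v⟩ ≠ c.1 ⟨l - 1, by omega⟩ + s} :=
    { toFun := fun x => ⟨⟨x.1.1, x.2.1, x.2.2.1⟩, ⟨x.1.2, x.2.2.2⟩⟩
      invFun := fun y => ⟨(y.1.1, y.2.1), y.1.2.1, y.1.2.2, y.2.2⟩
      left_inv := fun x => rfl
      right_inv := fun y => rfl }
  rw [Nat.card_congr (E1.trans ((Equiv.sigmaCongrRight (fun c : chainSet hl (eu ⟨f.1 u, f.2.1 u⟩) =>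
      lastEquiv (ev ⟨f.1 v, f.2.1 v⟩) (c.1 ⟨l - 1, by omega⟩))).trans
      (Equiv.sigmaEquivProd _ _)))]
  rw [Nat.card_prod, card_chainSet, card_nz, pow_succ]

lemma elim_isColoring (f : {f : V → C.X // C.IsColoring f}) (c : Fin l → Fin m)
    (s : Fin m) (h : ChainP C eu ev hl f c s) :
    (earCover C eu ev s huv hl).IsColoring
      (Sum.elim (fun a => Sum.inl (f.1 a)) (fun i => Sum.inr (i, c i))) := by
  constructor
  · rintro (a | i)
    · exact ⟨f.1 a, f.2.1 a, rfl⟩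
    · exact ⟨c i, rfl⟩
  · rintro (a | i) (b | i') hne hadj
    · exact f.2.2 a b (fun h' => hne (congrArg Sum.inl h')) hadj
    · rcases hadj with ⟨h0, hm, he⟩ | ⟨h0, hm, he⟩
      · obtain rfl : u = a := mem_unique C hm (f.2.1 a)
        have hi : i' = ⟨0, hl⟩ := Fin.ext h0
        subst hi
        exact h.1 he.symm
      · obtain rfl : v = a := mem_unique C hm (f.2.1 a)
        have hl1 : l - 1 < l := by omega
        have hi : i' = ⟨l - 1, hl1⟩ := Fin.ext h0
        rw [hi] at he
        exact h.2.2 he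
    · rcases hadj with ⟨h0, hm, he⟩ | ⟨h0, hm, he⟩
      · obtain rfl : u = b := mem_unique C hm (f.2.1 b)
        have hi : i = ⟨0, hl⟩ := Fin.ext h0
        subst hi
        exact h.1 he.symm
      · obtain rfl : v = b := mem_unique C hm (f.2.1 b)
        have hl1 : l - 1 < l := by omega
        have hi : i = ⟨l - 1, hl1⟩ := Fin.ext h0
        rw [hi] at he
        exact h.2.2 he
    · rcases hadj with ⟨h1, -⟩ | ⟨h1 | h1, h2⟩
      · exact hne (congrArg Sum.inr h1)
      · have hlt : (i : ℕ) + 1 < l := by rw [h1]; exact i'.isLt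
        apply h.2.1 (i : ℕ) hlt
        rw [show (⟨(i : ℕ) + 1, hlt⟩ : Fin l) = i' from Fin.ext h1,
          show (⟨(i : ℕ), by omega⟩ : Fin l) = i from Fin.ext rfl]
        exact h2.symm
      · have hlt : (i' : ℕ) + 1 < l := by rw [h1]; exact i.isLt
        apply h.2.1 (i' : ℕ) hlt
        rw [show (⟨(i' : ℕ) + 1, hlt⟩ : Fin l) = i from Fin.ext h1,
          show (⟨(i' : ℕ), by omega⟩ : Fin l) = i' from Fin.ext rfl]
        exact h2
  
def bigF : (Σ f : {f : V → C.X // C.IsColoring f},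
      {p : (Fin l → Fin m) × Fin m // ChainP C eu ev hl f p.1 p.2}) →
    (Σ t : Fin m, {g : (V ⊕ Fin l) → C.X ⊕ Fin l × Fin m //
      (earCover C eu ev t huv hl).IsColoring g}) :=
  fun x => ⟨x.2.1.2, ⟨Sum.elim (fun a => Sum.inl (x.1.1 a)) (fun i => Sum.inr (i, x.2.1.1 i)),
    elim_isColoring C eu ev huv hl x.1 x.2.1.1 x.2.1.2 x.2.2⟩⟩

lemma bigF_bijective : Function.Bijective (bigF C eu ev huv hl) := by
  constructor
  · rintro ⟨⟨f, hf⟩, ⟨⟨c, s⟩, hp⟩⟩ ⟨⟨f', hf'⟩, ⟨⟨c', s'⟩, hp'⟩⟩ h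
    obtain ⟨h1, h2⟩ := Sigma.mk.inj_iff.1 h
    subst h1
    have h4 := congrArg Subtype.val (eq_of_heq h2)
    have hff : f = f' := funext fun a => by
      have h5 := congrFun h4 (Sum.inl a)
      simpa using h5
    have hcc : c = c' := funext fun i => by
      have h5 := congrFun h4 (Sum.inr i)
      simpa using h5
    subst hff
    subst hcc
    rfl
  · rintro ⟨s, g, hg⟩
    have hfe : ∀ a : V, ∃ x0, x0 ∈ C.L a ∧ g (Sum.inl a) = Sum.inl x0 := by
      intro a
      obtain ⟨x0, hx0, he⟩ := hg.1 (Sum.inl a)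
      exact ⟨x0, hx0, he.symm⟩
    choose f hf1 hf2 using hfe
    have hcex : ∀ i : Fin l, ∃ j, g (Sum.inr i) = Sum.inr (i, j) := fun i => hg.1 (Sum.inr i)
    choose c hc using hcex
    have hfcol : C.IsColoring f := by
      refine ⟨hf1, fun a b hab hadj => ?_⟩
      apply hg.2 (Sum.inl a) (Sum.inl b) (fun h => hab (by simpa using h))
      rw [hf2 a, hf2 b]
      exact hadj
    have hA : c ⟨0, hl⟩ ≠ eu ⟨f u, hf1 u⟩ := by
      intro he
      apply hg.2 (Sum.inl u) (Sum.inr ⟨0, hl⟩) (by simp)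
      rw [hf2 u, hc ⟨0, hl⟩]
      exact Or.inl ⟨rfl, hf1 u, he.symm⟩
    have hchain : ∀ (k : ℕ) (hk : k + 1 < l), c ⟨k + 1, hk⟩ ≠ c ⟨k, by omega⟩ := by
      intro k hk he
      apply hg.2 (Sum.inr ⟨k, by omega⟩) (Sum.inr ⟨k + 1, hk⟩)
        (by simp only [ne_eq, Sum.inr.injEq, Fin.mk.injEq]; omega)
      rw [hc _, hc _]
      exact Or.inr ⟨Or.inl rfl, he.symm⟩
    have hB : ev ⟨f v, hf1 v⟩ ≠ c ⟨l - 1, by omega⟩ + s := by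
      intro he
      apply hg.2 (Sum.inl v) (Sum.inr ⟨l - 1, by omega⟩) (by simp)
      rw [hf2 v, hc _]
      exact Or.inr ⟨rfl, hf1 v, he⟩
    refine ⟨⟨⟨f, hfcol⟩, ⟨(c, s), hA, hchain, hB⟩⟩, ?_⟩
    have hgeq : (Sum.elim (fun a => Sum.inl (f a)) (fun i => Sum.inr (i, c i)) :
        (V ⊕ Fin l) → C.X ⊕ Fin l × Fin m) = g := by
      funext w
      rcases w with a | i
      · exact (hf2 a).symm
      · exact (hc i).symm
    exact congrArg (fun z : {g : (V ⊕ Fin l) → C.X ⊕ Fin l × Fin m //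
        (earCover C eu ev s huv hl).IsColoring g} =>
      (⟨s, z⟩ : Σ t : Fin m, {g : (V ⊕ Fin l) → C.X ⊕ Fin l × Fin m //
        (earCover C eu ev t huv hl).IsColoring g})) (Subtype.ext hgeq)

lemma sum_counts [Fintype V] :
    ∑ t : Fin m, (earCover C eu ev t huv hl).count = C.count * (m - 1) ^ (l + 1) := by
  classical
  haveI hX : Finite C.X := cover_finite C
  letI instCol : ∀ t : Fin m, Fintype {g : (V ⊕ Fin l) → C.X ⊕ Fin l × Fin m //
      (earCover C eu ev t huv hl).IsColoring g} := fun t =>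
      @Fintype.ofFinite _ (@Subtype.finite (V ⊕ Fin l → C.X ⊕ Fin l × Fin m) inferInstance _)
  letI instF : Fintype {f : V → C.X // C.IsColoring f} := Fintype.ofFinite _
  letI instP : ∀ f, Fintype {p : (Fin l → Fin m) × Fin m //
      ChainP C eu ev hl f p.1 p.2} := fun f => Fintype.ofFinite _
  have hbij := Nat.card_congr (Equiv.ofBijective _ (bigF_bijective C eu ev huv hl))
  have hcount : ∀ t : Fin m, (earCover C eu ev t huv hl).count =
      Nat.card {g : (V ⊕ Fin l) → C.X ⊕ Fin l × Fin m //
        (earCover C eu ev t huv hl).IsColoring g} := fun t => rfl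
  have hL : Nat.card (Σ t : Fin m, {g : (V ⊕ Fin l) → C.X ⊕ Fin l × Fin m //
        (earCover C eu ev t huv hl).IsColoring g}) =
      ∑ t : Fin m, (earCover C eu ev t huv hl).count := by
    rw [Nat.card_eq_fintype_card, Fintype.card_sigma]
    refine Finset.sum_congr rfl fun t _ => ?_
    rw [hcount t, Nat.card_eq_fintype_card]
  have hR : Nat.card (Σ f : {f : V → C.X // C.IsColoring f},
        {p : (Fin l → Fin m) × Fin m // ChainP C eu ev hl f p.1 p.2}) =
      C.count * (m - 1) ^ (l + 1) := by
    rw [Nat.card_eq_fintype_card, Fintype.card_sigma]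
    have hper : ∀ f, Fintype.card {p : (Fin l → Fin m) × Fin m //
        ChainP C eu ev hl f p.1 p.2} = (m - 1) ^ (l + 1) := fun f => by
      rw [← Nat.card_eq_fintype_card]
      exact card_chainP C eu ev hl f
    rw [Finset.sum_congr rfl fun f _ => hper f, Finset.sum_const, Finset.card_univ,
      smul_eq_mul, DPCover.count, Nat.card_eq_fintype_card]
  rw [← hL, ← hbij, hR]

end Big
end Aux13
theorem stmt_13 {V : Type} [Fintype V] (G : SimpleGraph V) (u v : V) (huv : u ≠ v)
    (l : ℕ) (hl : 1 ≤ l) (m : ℕ) :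
    (PDP (addEar G u v l) m : ℚ) ≤
      (PDP G m : ℚ) * ((m : ℚ) - 1) ^ (l + 1) / (m : ℚ) := by
  rcases Nat.eq_zero_or_pos m with rfl | hm
  · have hempty : IsEmpty {f : (V ⊕ Fin l) → ((V ⊕ Fin l) × Fin 0) //
        (Aux13.canonCover (addEar G u v l) 0).IsColoring f} :=
      ⟨fun f => (f.1 (Sum.inr ⟨0, hl⟩)).2.elim0⟩
    have hcount : (Aux13.canonCover (addEar G u v l) 0).count = 0 :=
      @Nat.card_of_isEmpty _ hempty
    have h0 : PDP (addEar G u v l) 0 = 0 := by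
      have hle := Aux13.PDP_le (Aux13.canonCover (addEar G u v l) 0)
      rw [hcount] at hle
      omega
    rw [h0]
    simp
  · haveI : NeZero m := ⟨hm.ne'⟩
    obtain ⟨C, hC⟩ := Aux13.exists_cover_count_eq_PDP G m
    haveI hXfin : Finite C.X := Aux13.cover_finite C
    haveI : Fintype ↥(C.L u) := Fintype.ofFinite _
    haveI : Fintype ↥(C.L v) := Fintype.ofFinite _
    have eu : ↥(C.L u) ≃ Fin m :=
      Fintype.equivFinOfCardEq (by rw [← Nat.card_eq_fintype_card, C.fold])
    have ev : ↥(C.L v) ≃ Fin m :=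
      Fintype.equivFinOfCardEq (by rw [← Nat.card_eq_fintype_card, C.fold])
    have hsum := Aux13.sum_counts C eu ev huv hl
    obtain ⟨t0, -, ht0⟩ := Finset.exists_min_image Finset.univ
      (fun t : Fin m => (Aux13.earCover C eu ev t huv hl).count) ⟨⟨0, hm⟩, Finset.mem_univ _⟩
    have hmin : m * (Aux13.earCover C eu ev t0 huv hl).count ≤
        PDP G m * (m - 1) ^ (l + 1) := by
      calc m * (Aux13.earCover C eu ev t0 huv hl).count
          = ∑ _t : Fin m, (Aux13.earCover C eu ev t0 huv hl).count := by
            rw [Finset.sum_const, Finset.card_univ, Fintype.card_fin, smul_eq_mul]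
        _ ≤ ∑ t : Fin m, (Aux13.earCover C eu ev t huv hl).count :=
            Finset.sum_le_sum fun t _ => ht0 t (Finset.mem_univ t)
        _ = C.count * (m - 1) ^ (l + 1) := hsum
        _ = PDP G m * (m - 1) ^ (l + 1) := by rw [hC]
    have hP : PDP (addEar G u v l) m ≤ (Aux13.earCover C eu ev t0 huv hl).count :=
      Aux13.PDP_le _
    have key : m * PDP (addEar G u v l) m ≤ PDP G m * (m - 1) ^ (l + 1) :=
      le_trans (Nat.mul_le_mul_left m hP) hmin
    have hmq : (0 : ℚ) < (m : ℚ) := by exact_mod_cast hm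
    rw [le_div_iff₀ hmq]
    have hcast : ((m - 1 : ℕ) : ℚ) = (m : ℚ) - 1 := by
      rw [Nat.cast_sub hm, Nat.cast_one]
    calc (PDP (addEar G u v l) m : ℚ) * m
        = ((m * PDP (addEar G u v l) m : ℕ) : ℚ) := by push_cast; ring
      _ ≤ ((PDP G m * (m - 1) ^ (l + 1) : ℕ) : ℚ) := by exact_mod_cast key
      _ = (PDP G m : ℚ) * ((m : ℚ) - 1) ^ (l + 1) := by push_cast [hcast]; ring
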